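/- arXiv:2311.08021 — 2 statements merged into one kernel-verified Lean document; each statement's English description precedes it below -/
import Mathlib

section
/- For d ≥ 1 and n sufficiently large with 2d < n, the product Q_d = ∏_{i=0}^{d-1} (n-3i)/(n-1-2i) satisfies Q_d ≤ n/(n-1) and Q_d ≥ 1 + d·log(1 - d/(n-2d)). -/
open Finset

/-- For `d ≥ 1` and `n` sufficiently large with `2d < n`, the product
`Q_d = ∏_{i=0}^{d-1} (n-3i)/(n-1-2i)` satisfies `Q_d ≤ n/(n-1)` and
`Q_d ≥ 1 + d·log(1 - d/(n-2d))`. -/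
theorem Qd_bounds (d : ℕ) (hd : 1 ≤ d) :
    ∃ N : ℕ, ∀ n : ℕ, N ≤ n → 2 * d < n →
      (∏ i ∈ Finset.range d, (((n : ℝ) - 3 * i) / ((n : ℝ) - 1 - 2 * i))) ≤
          (n : ℝ) / ((n : ℝ) - 1) ∧
      1 + (d : ℝ) * Real.log (1 - (d : ℝ) / ((n : ℝ) - 2 * d)) ≤
        ∏ i ∈ Finset.range d, (((n : ℝ) - 3 * i) / ((n : ℝ) - 1 - 2 * i)) := by
  refine ⟨4 * d, fun n hn h2d => ?_⟩
  have hd1 : (1 : ℝ) ≤ d := by exact_mod_cast hd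
  have hn4 : (4 : ℝ) * d ≤ n := by
    have := (Nat.cast_le (α := ℝ)).mpr hn; push_cast at this; linarith
  have hile : ∀ i ∈ Finset.range d, (i : ℝ) + 1 ≤ d := by
    intro i hi
    exact_mod_cast Nat.succ_le_of_lt (Finset.mem_range.mp hi)
  have hD : ∀ i ∈ Finset.range d, (0 : ℝ) < (n : ℝ) - 1 - 2 * i := by
    intro i hi
    have := hile i hi
    nlinarith
  have hNum : ∀ i ∈ Finset.range d, (0 : ℝ) ≤ (n : ℝ) - 3 * i := by
    intro i hi
    have := hile i hi
    nlinarith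
  have hf0 : ∀ i ∈ Finset.range d,
      (0 : ℝ) ≤ ((n : ℝ) - 3 * i) / ((n : ℝ) - 1 - 2 * i) :=
    fun i hi => div_nonneg (hNum i hi) (hD i hi).le
  constructor
  · -- upper bound
    have hle : ∀ i ∈ Finset.range d,
        ((n : ℝ) - 3 * i) / ((n : ℝ) - 1 - 2 * i)
          ≤ (if i = 0 then (n : ℝ) / ((n : ℝ) - 1) else 1) := by
      intro i hi
      by_cases h0 : i = 0
      · subst h0
        have h00 : ((n : ℝ) - 3 * (0 : ℕ)) / ((n : ℝ) - 1 - 2 * (0 : ℕ))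
            = (n : ℝ) / ((n : ℝ) - 1) := by norm_num
        simp [h00]
      · rw [if_neg h0]
        rw [div_le_one (hD i hi)]
        have h1i : (1 : ℝ) ≤ i := by
          have : 1 ≤ i := Nat.one_le_iff_ne_zero.mpr h0
          exact_mod_cast this
        linarith
    calc (∏ i ∈ Finset.range d, (((n : ℝ) - 3 * i) / ((n : ℝ) - 1 - 2 * i)))
        ≤ ∏ i ∈ Finset.range d, (if i = 0 then (n : ℝ) / ((n : ℝ) - 1) else 1) :=
          Finset.prod_le_prod hf0 hle
      _ = (n : ℝ) / ((n : ℝ) - 1) := by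
          rw [Finset.prod_eq_single_of_mem 0 (Finset.mem_range.mpr hd)
            (fun i _ hi0 => if_neg hi0)]
          simp
  · -- lower bound
    set x : ℝ := 1 - (d : ℝ) / ((n : ℝ) - 2 * d) with hxdef
    have hden : (0 : ℝ) < (n : ℝ) - 2 * d := by nlinarith
    have hx0 : 0 < x := by
      have : (d : ℝ) / ((n : ℝ) - 2 * d) < 1 := by
        rw [div_lt_one hden]; nlinarith
      simp only [hxdef]; linarith
    have h2 : ∀ i ∈ Finset.range d,
        x ≤ ((n : ℝ) - 3 * i) / ((n : ℝ) - 1 - 2 * i) := by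
      intro i hi
      have hDi := hD i hi
      have hii := hile i hi
      have key : ((n : ℝ) - 3 * i) / ((n : ℝ) - 1 - 2 * i)
          = 1 - ((i : ℝ) - 1) / ((n : ℝ) - 1 - 2 * i) := by
        rw [eq_sub_iff_add_eq, ← add_div, div_eq_one_iff_eq hDi.ne']
        ring
      rw [key, hxdef]
      have hdd : ((i : ℝ) - 1) / ((n : ℝ) - 1 - 2 * i)
          ≤ (d : ℝ) / ((n : ℝ) - 2 * d) :=
        div_le_div₀ (by linarith) (by linarith) hden (by linarith)
      linarith
    have hxd : x ^ d ≤ ∏ i ∈ Finset.range d,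
        (((n : ℝ) - 3 * i) / ((n : ℝ) - 1 - 2 * i)) := by
      calc x ^ d = ∏ _i ∈ Finset.range d, x := by
            rw [Finset.prod_const, Finset.card_range]
        _ ≤ _ := Finset.prod_le_prod (fun i _ => hx0.le) h2
    have hexp : 1 + (d : ℝ) * Real.log x ≤ x ^ d := by
      have h1 := Real.add_one_le_exp ((d : ℝ) * Real.log x)
      have h2' : Real.exp ((d : ℝ) * Real.log x) = x ^ d := by
        rw [Real.exp_nat_mul, Real.exp_log hx0]
      linarith
    linarith
end

section
/- Let G be a graph on n vertices whose b-edges partition the vertices into n/3 triangles and whose a-edges form a perfect matching, and suppose G contains k simple ab-cycles visiting triangle sets J₁,…,J_k which are pairwise distinct but may overlap. If t₂ triangles belong to exactly 2 of the cycles and t₃ triangles belong to exactly 3 of the cycles, then t₂ + t₃ is even. -/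
/-- Given a fixpoint-free order-3 permutation `σ3` on the vertices (whose orbits
are the `b`-triangles) and a matching `σ2` (the `a`-edges), `SimpleCycleOn σ3 σ2 J`
says that the resulting graph contains a simple `ab`-cycle visiting exactly the
`b`-triangles forming the (`σ3`-closed) vertex set `J`: there is a choice `V` of
exactly one vertex per triangle of `J` (the vertices reached after reading an
occurrence of `ab`), such that reading `ab` (i.e. applying `σ3 ∘ σ2`) permutes
`V` along a single cycle, and no `a`-edge used stays inside a `b`-triangle
(simplicity). -/
def SimpleCycleOn {n : ℕ} (σ3 σ2 : Equiv.Perm (Fin n)) (J : Finset (Fin n)) : Prop :=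
  ∃ V : Finset (Fin n), V.Nonempty ∧ V ⊆ J ∧
    (∀ x ∈ J, ∃! y, y ∈ V ∧ (y = x ∨ y = σ3 x ∨ y = σ3 (σ3 x))) ∧
    (∀ v ∈ V, (σ3 * σ2) v ∈ V) ∧
    (∀ v ∈ V, ∀ w ∈ V, ∃ m : ℕ, ((σ3 * σ2) ^ m) v = w) ∧
    (∀ v ∈ V, σ2 v ≠ σ3 v ∧ σ2 v ≠ σ3 (σ3 v))

open Finset

lemma even_card_of_invol {α : Type*} [DecidableEq α] (g : α → α) (hg : ∀ x, g (g x) = x) :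
    ∀ s : Finset α, (∀ x ∈ s, g x ∈ s) → (∀ x ∈ s, g x ≠ x) → Even s.card := by
  intro s
  induction s using Finset.strongInduction with
  | _ s ih =>
    intro hmap hfix
    rcases s.eq_empty_or_nonempty with rfl | ⟨x, hx⟩
    · simp
    · have hgx : g x ∈ s := hmap x hx
      have hne : g x ≠ x := hfix x hx
      have hsubset : ({x, g x} : Finset α) ⊆ s := by
        intro y hy
        rcases Finset.mem_insert.1 hy with rfl | hy
        · exact hx
        · exact (Finset.mem_singleton.1 hy) ▸ hgx
      have hss : s \ {x, g x} ⊂ s :=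
        Finset.sdiff_ssubset hsubset ⟨x, Finset.mem_insert_self _ _⟩
      have hcard2 : ({x, g x} : Finset α).card = 2 := by
        rw [Finset.card_insert_of_notMem (by simp [Ne.symm hne]), Finset.card_singleton]
      have hcard : s.card = (s \ {x, g x}).card + 2 := by
        rw [Finset.card_sdiff_of_subset hsubset, hcard2]
        have := Finset.card_le_card hsubset
        omega
      have heven : Even ((s \ {x, g x}).card) := by
        refine ih _ hss ?_ ?_
        · intro y hy
          rw [Finset.mem_sdiff] at hy ⊢
          refine ⟨hmap y hy.1, ?_⟩
          simp only [Finset.mem_insert, Finset.mem_singleton, not_or] at hy ⊢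
          constructor
          · intro h; exact hy.2.2 (by rw [← hg y, h])
          · intro h; exact hy.2.1 (by rw [← hg y, h, hg])
        · intro y hy; exact hfix y (Finset.mem_sdiff.1 hy).1
      obtain ⟨c, hc⟩ := heven
      exact ⟨c + 1, by omega⟩

/-- Let `G` be a graph on `n` vertices whose `b`-edges partition the vertices
into triangles (orbits of the fixpoint-free order-3 permutation `σ3`) and whose
`a`-edges form a perfect matching (the fixpoint-free involution `σ2`), and
suppose `G` contains `k` simple `ab`-cycles visiting pairwise distinct (but
possibly overlapping) triangle sets `J₁,…,J_k`. If `t₂` triangles belong to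
exactly 2 of the cycles and `t₃` triangles belong to exactly 3 of the cycles
(so `3·t₂` resp. `3·t₃` vertices lie in exactly 2 resp. 3 of the `J_i`), then
`t₂ + t₃` is even. -/
theorem overlap_parity (n k : ℕ) (σ3 σ2 : Equiv.Perm (Fin n))
    (hσ3 : σ3 ^ 3 = 1) (hσ3f : ∀ x, σ3 x ≠ x)
    (hσ2 : σ2 ^ 2 = 1) (hσ2f : ∀ x, σ2 x ≠ x)
    (J : Fin k → Finset (Fin n)) (hJcl : ∀ i, ∀ x ∈ J i, σ3 x ∈ J i)
    (hJne : ∀ i j, i ≠ j → J i ≠ J j)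
    (hcyc : ∀ i, SimpleCycleOn σ3 σ2 (J i))
    (t₂ t₃ : ℕ)
    (ht₂ : 3 * t₂ =
      (Finset.univ.filter fun x : Fin n =>
        (Finset.univ.filter fun i : Fin k => x ∈ J i).card = 2).card)
    (ht₃ : 3 * t₃ =
      (Finset.univ.filter fun x : Fin n =>
        (Finset.univ.filter fun i : Fin k => x ∈ J i).card = 3).card) :
    Even (t₂ + t₃) := by
  classical
  -- basic facts about σ3 and σ2
  have h3 : ∀ x, σ3 (σ3 (σ3 x)) = x := by
    intro x
    have h : (σ3 ^ 3) x = x := by rw [hσ3]; rfl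
    simpa [pow_succ, Equiv.Perm.mul_apply] using h
  have h2 : ∀ x, σ2 (σ2 x) = x := by
    intro x
    have h : (σ2 ^ 2) x = x := by rw [hσ2]; rfl
    simpa [pow_succ, Equiv.Perm.mul_apply] using h
  have hne2 : ∀ x, σ3 (σ3 x) ≠ x := by
    intro x h
    have := congrArg σ3 h
    rw [h3] at this
    exact hσ3f x this.symm
  have hne3 : ∀ x, σ3 (σ3 x) ≠ σ3 x := fun x h => hσ3f (σ3 x) h
  -- extract the vertex sets
  simp only [SimpleCycleOn] at hcyc
  choose V hVne hVsub hVuniq hVcl hVtr hVsimp using hcyc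
  -- closure under powers of σ3 * σ2
  have hVpow : ∀ i (m : ℕ), ∀ v ∈ V i, ((σ3 * σ2) ^ m) v ∈ V i := by
    intro i m
    induction m with
    | zero => intro v hv; simpa using hv
    | succ m ih =>
      intro v hv
      rw [pow_succ, Equiv.Perm.mul_apply]
      exact ih _ (hVcl i v hv)
  -- closure under the inverse
  have hVpre : ∀ i v, (σ3 * σ2) v ∈ V i → v ∈ V i := by
    intro i v hv
    set N := orderOf (σ3 * σ2) with hN
    have hNpos : 0 < N := orderOf_pos _
    have hkey : ((σ3 * σ2) ^ (N - 1)) ((σ3 * σ2) v) = v := by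
      have h1 : (σ3 * σ2) ^ (N - 1) * (σ3 * σ2) = 1 := by
        rw [← pow_succ, Nat.sub_add_cancel hNpos]
        exact pow_orderOf_eq_one _
      have := congrArg (fun f : Equiv.Perm (Fin n) => f v) h1
      simpa [Equiv.Perm.mul_apply] using this
    rw [← hkey]
    exact hVpow i _ _ hv
  -- characterization of J i via V i
  have hJchar : ∀ i x, x ∈ J i ↔ ∃ y ∈ V i, (y = x ∨ y = σ3 x ∨ y = σ3 (σ3 x)) := by
    intro i x
    constructor
    · intro hx
      obtain ⟨y, hy, -⟩ := hVuniq i x hx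
      exact ⟨y, hy.1, hy.2⟩
    · rintro ⟨y, hyV, hy⟩
      have hyJ := hVsub i hyV
      rcases hy with rfl | h | h
      · exact hyJ
      · have hx : σ3 (σ3 y) = x := by rw [h]; exact h3 x
        rw [← hx]
        exact hJcl i _ (hJcl i _ hyJ)
      · have hx : σ3 y = x := by rw [h]; exact h3 x
        rw [← hx]
        exact hJcl i _ hyJ
  -- the V i are pairwise disjoint
  have hVinj : ∀ i j x, x ∈ V i → x ∈ V j → i = j := by
    intro i j x hxi hxj
    by_contra hij
    apply hJne i j hij
    have hVeq : V i = V j := by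
      apply Finset.Subset.antisymm
      · intro w hw
        obtain ⟨m, hm⟩ := hVtr i x hxi w hw
        exact hm ▸ hVpow j m x hxj
      · intro w hw
        obtain ⟨m, hm⟩ := hVtr j x hxj w hw
        exact hm ▸ hVpow i m x hxi
    ext z
    rw [hJchar, hJchar, hVeq]
  -- the multiplicity of x equals the number of W-vertices in x's triangle
  set I : Fin n → ℕ := fun y => if ∃ i, y ∈ V i then 1 else 0 with hI
  have hmcard : ∀ x : Fin n, (Finset.univ.filter fun i : Fin k => x ∈ J i).card
      = I x + I (σ3 x) + I (σ3 (σ3 x)) := by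
    intro x
    have hbij : (Finset.univ.filter fun i : Fin k => x ∈ J i).card =
        (({x, σ3 x, σ3 (σ3 x)} : Finset (Fin n)).filter (fun y => ∃ i, y ∈ V i)).card := by
      refine Finset.card_bij
        (fun i hi => Classical.choose (hVuniq i x (by simpa using hi))) ?_ ?_ ?_
      · intro i hi
        have hspec := Classical.choose_spec (hVuniq i x (by simpa using hi))
        obtain ⟨⟨hyV, hy⟩, -⟩ := hspec
        rw [Finset.mem_filter]
        refine ⟨?_, ⟨i, hyV⟩⟩
        simp only [Finset.mem_insert, Finset.mem_singleton]
        exact hy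
      · intro i₁ h₁ i₂ h₂ heq
        have hs₁ := (Classical.choose_spec (hVuniq i₁ x (by simpa using h₁))).1.1
        have hs₂ := (Classical.choose_spec (hVuniq i₂ x (by simpa using h₂))).1.1
        dsimp only at heq
        rw [heq] at hs₁
        exact hVinj i₁ i₂ _ hs₁ hs₂
      · intro b hb
        rw [Finset.mem_filter] at hb
        obtain ⟨hbt, i, hbV⟩ := hb
        simp only [Finset.mem_insert, Finset.mem_singleton] at hbt
        have hx : x ∈ J i := (hJchar i x).2 ⟨b, hbV, hbt⟩
        refine ⟨i, by simpa using hx, ?_⟩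
        exact ((Classical.choose_spec (hVuniq i x (by simpa using hx))).2 b ⟨hbV, hbt⟩).symm
    rw [hbij, Finset.card_filter,
      Finset.sum_insert (by simp [Ne.symm (hσ3f x), Ne.symm (hne2 x)]),
      Finset.sum_insert (by simp [Ne.symm (hne3 x)]), Finset.sum_singleton, hI]
    ring
  have hIle : ∀ y, I y ≤ 1 := by
    intro y; rw [hI]; dsimp only; split <;> omega
  -- the key sum in two ways
  set S : Finset (Fin n) :=
    Finset.univ.filter (fun x => (∃ i, x ∈ V i) ∧ (∃ i, σ3 x ∈ V i)) with hS
  have hsum1 : ∑ x : Fin n, ((Finset.univ.filter fun i : Fin k => x ∈ J i).card).choose 2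
      = 3 * S.card := by
    have hpt : ∀ x : Fin n,
        ((Finset.univ.filter fun i : Fin k => x ∈ J i).card).choose 2
        = I x * I (σ3 x) + I (σ3 x) * I (σ3 (σ3 x)) + I (σ3 (σ3 x)) * I x := by
      intro x
      rw [hmcard x]
      have ha := hIle x; have hb := hIle (σ3 x); have hc := hIle (σ3 (σ3 x))
      interval_cases (I x) <;> interval_cases (I (σ3 x)) <;>
        interval_cases (I (σ3 (σ3 x))) <;> decide
    calc ∑ x : Fin n, ((Finset.univ.filter fun i : Fin k => x ∈ J i).card).choose 2
        = ∑ x : Fin n, (I x * I (σ3 x) + I (σ3 x) * I (σ3 (σ3 x)) + I (σ3 (σ3 x)) * I x) := by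
          exact Finset.sum_congr rfl (fun x _ => hpt x)
      _ = (∑ x : Fin n, I x * I (σ3 x)) + (∑ x : Fin n, I (σ3 x) * I (σ3 (σ3 x)))
            + (∑ x : Fin n, I (σ3 (σ3 x)) * I x) := by
          rw [Finset.sum_add_distrib, Finset.sum_add_distrib]
      _ = 3 * ∑ x : Fin n, I x * I (σ3 x) := by
          have e1 : ∑ x : Fin n, I (σ3 x) * I (σ3 (σ3 x))
              = ∑ x : Fin n, I x * I (σ3 x) :=
            Equiv.sum_comp σ3 (fun y => I y * I (σ3 y))
          have e2 : ∑ x : Fin n, I (σ3 (σ3 x)) * I x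
              = ∑ x : Fin n, I x * I (σ3 x) := by
            have := Equiv.sum_comp σ3 (fun y => I (σ3 (σ3 y)) * I y)
            calc ∑ x : Fin n, I (σ3 (σ3 x)) * I x
                = ∑ x : Fin n, I (σ3 (σ3 (σ3 x))) * I (σ3 x) := this.symm
              _ = ∑ x : Fin n, I x * I (σ3 x) := by
                  exact Finset.sum_congr rfl (fun x _ => by rw [h3])
          rw [e1, e2]; ring
      _ = 3 * S.card := by
          rw [hS, Finset.card_filter]
          congr 1
          refine Finset.sum_congr rfl (fun x _ => ?_)
          rw [hI]
          dsimp only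
          by_cases h1 : ∃ i, x ∈ V i <;> by_cases h2' : ∃ i, σ3 x ∈ V i <;>
            simp [h1, h2']
  -- evenness of S.card via the involution σ2
  have hSeven : Even S.card := by
    refine even_card_of_invol σ2 h2 S ?_ ?_
    · intro x hx
      rw [hS, Finset.mem_filter] at hx ⊢
      obtain ⟨-, ⟨i, hxi⟩, ⟨j, hxj⟩⟩ := hx
      refine ⟨Finset.mem_univ _, ⟨j, ?_⟩, ⟨i, ?_⟩⟩
      · apply hVpre j
        have : (σ3 * σ2) (σ2 x) = σ3 x := by
          simp [Equiv.Perm.mul_apply, h2]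
        rw [this]; exact hxj
      · have : σ3 (σ2 x) = (σ3 * σ2) x := rfl
        rw [this]; exact hVcl i x hxi
    · intro x _; exact hσ2f x
  -- the sum equals 3 t₂ + 9 t₃
  have hmle : ∀ x : Fin n, (Finset.univ.filter fun i : Fin k => x ∈ J i).card ≤ 3 := by
    intro x
    rw [hmcard x]
    have := hIle x; have := hIle (σ3 x); have := hIle (σ3 (σ3 x))
    omega
  have hsum2 : ∑ x : Fin n, ((Finset.univ.filter fun i : Fin k => x ∈ J i).card).choose 2
      = 3 * t₂ + 3 * (3 * t₃) := by
    have hpt : ∀ x : Fin n,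
        ((Finset.univ.filter fun i : Fin k => x ∈ J i).card).choose 2
        = (if (Finset.univ.filter fun i : Fin k => x ∈ J i).card = 2 then 1 else 0)
          + 3 * (if (Finset.univ.filter fun i : Fin k => x ∈ J i).card = 3 then 1 else 0) := by
      intro x
      have h := hmle x
      set m := (Finset.univ.filter fun i : Fin k => x ∈ J i).card with hm
      interval_cases m <;> decide
    rw [Finset.sum_congr rfl (fun x _ => hpt x), Finset.sum_add_distrib, ← Finset.mul_sum,
      ← Finset.card_filter, ← Finset.card_filter, ← ht₂, ← ht₃]
  have hfinal : t₂ + 3 * t₃ = S.card := by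
    have : 3 * (t₂ + 3 * t₃) = 3 * S.card := by rw [← hsum1, hsum2]; ring
    omega
  obtain ⟨c, hc⟩ := hSeven
  exact ⟨c - t₃, by omega⟩
end
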